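/- arXiv:1110.1432 — 4 statements merged into one kernel-verified Lean document; each statement's English description precedes it below -/
import Mathlib

section
/- Let R = W·M where W ∈ ℝ^{p×n} and M ∈ ℝ^{n×m} are nonnegative matrices, and suppose W satisfies the sparseness assumption with pure-row indices i_1,…,i_n. Then every row of R is a nonnegative linear combination of the rows R^{i_1},…,R^{i_n}: precisely, for each i ∈ {1,…,p}, R^i = Σ_{k=1}^{n} (W_{i,k}/W_{i_k,k}) · R^{i_k}, and all coefficients W_{i,k}/W_{i_k,k} are nonnegative. -/
/-- Under the sparseness assumption, every row of `R = W * M` is a nonnegative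
linear combination of the pure rows `R (idx 1), …, R (idx n)`:
`R i = ∑ k, (W i k / W (idx k) k) • R (idx k)` with all coefficients nonnegative. -/
theorem row_nonneg_combination_of_pure_rows {p n m : ℕ}
    (W : Matrix (Fin p) (Fin n) ℝ) (M : Matrix (Fin n) (Fin m) ℝ)
    (R : Matrix (Fin p) (Fin m) ℝ)
    (hW : ∀ i j, 0 ≤ W i j) (hM : ∀ i j, 0 ≤ M i j)
    (hR : R = W * M)
    (idx : Fin n → Fin p)
    (hpos : ∀ j, 0 < W (idx j) j)
    (hzero : ∀ j k, k ≠ j → W (idx j) k = 0) :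
    ∀ i : Fin p, (∀ k : Fin n, 0 ≤ W i k / W (idx k) k) ∧
      R i = ∑ k : Fin n, (W i k / W (idx k) k) • R (idx k) := by
  intro i
  constructor
  · intro k
    exact div_nonneg (hW i k) (hpos k).le
  · subst hR
    funext j
    have hrow : ∀ k : Fin n, (W * M) (idx k) j = W (idx k) k * M k j := by
      intro k
      rw [Matrix.mul_apply]
      rw [Finset.sum_eq_single k]
      · intro b _ hb; rw [hzero k b hb, zero_mul]
      · intro h; exact absurd (Finset.mem_univ k) h
    rw [Matrix.mul_apply, Finset.sum_apply]
    apply Finset.sum_congr rfl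
    intro k _
    rw [Pi.smul_apply, hrow k, smul_eq_mul]
    rw [div_mul_eq_mul_div, mul_comm (W (idx k) k), mul_div_assoc, mul_div_assoc,
      div_self (hpos k).ne', mul_one]
end

section
/- Let R = W·M where W ∈ ℝ^{p×n} and M ∈ ℝ^{n×m} are nonnegative matrices, suppose W satisfies the sparseness assumption with pure-row indices i_1,…,i_n, and suppose the rows of M are linearly independent. Fix j ∈ {1,…,n}. If R^{i_j} = Σ_{i≠i_j} λ_i R^i for some nonnegative coefficients λ_i ≥ 0, then there exists an index i ≠ i_j with λ_i > 0 such that the row R^i is a positive scalar multiple of the j-th row M^j of M (equivalently, W_{i,j} > 0 and W_{i,k} = 0 for all k ≠ j). -/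
open Finset

/-- With `R = W * M`, `W, M ≥ 0`, `W` satisfying the sparseness assumption with
pure-row indices `idx`, and the rows of `M` linearly independent: if the pure row `R (idx j)`
is a nonnegative combination of the other rows, then some row `R i` (with `i ≠ idx j` and a
strictly positive coefficient) is a positive scalar multiple of the `j`-th row of `M`
(equivalently `W i j > 0` and `W i k = 0` for all `k ≠ j`). -/
theorem pure_row_combination_gives_duplicate {p n m : ℕ}
    (W : Matrix (Fin p) (Fin n) ℝ) (M : Matrix (Fin n) (Fin m) ℝ)
    (R : Matrix (Fin p) (Fin m) ℝ)
    (hW : ∀ i j, 0 ≤ W i j) (hM : ∀ i j, 0 ≤ M i j)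
    (hR : R = W * M)
    (idx : Fin n → Fin p)
    (hpos : ∀ j, 0 < W (idx j) j)
    (hzero : ∀ j k, k ≠ j → W (idx j) k = 0)
    (hindep : LinearIndependent ℝ M)
    (j : Fin n)
    (lam : Fin p → ℝ) (hlam : ∀ i, 0 ≤ lam i)
    (hcomb : R (idx j) = ∑ i ∈ univ.erase (idx j), lam i • R i) :
    ∃ i : Fin p, i ≠ idx j ∧ 0 < lam i ∧
      (∃ c : ℝ, 0 < c ∧ R i = c • M j) ∧
      0 < W i j ∧ ∀ k, k ≠ j → W i k = 0 := by
  have hrow : ∀ i, R i = ∑ k, W i k • M k := by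
    intro i; funext l
    simp [hR, Matrix.mul_apply, Finset.sum_apply]
  set c : Fin n → ℝ := fun k => W (idx j) k - ∑ i ∈ univ.erase (idx j), lam i * W i k with hc
  have hc0 : ∀ k, c k = 0 := by
    apply Fintype.linearIndependent_iff.mp hindep c
    have key : ∑ k, c k • M k = R (idx j) - ∑ i ∈ univ.erase (idx j), lam i • R i := by
      simp only [hc, sub_smul, Finset.sum_sub_distrib, Finset.sum_smul]
      congr 1
      · exact (hrow (idx j)).symm
      · rw [Finset.sum_comm]
        refine Finset.sum_congr rfl fun i _ => ?_
        rw [hrow i, Finset.smul_sum]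
        exact Finset.sum_congr rfl fun k _ => (smul_smul _ _ _).symm
    rw [key, ← hcomb, sub_self]
  have hj : W (idx j) j = ∑ i ∈ univ.erase (idx j), lam i * W i j := by
    have := hc0 j; simp only [hc] at this; linarith
  have hjpos : 0 < ∑ i ∈ univ.erase (idx j), lam i * W i j := hj ▸ hpos j
  obtain ⟨i, hi, hipos⟩ : ∃ i ∈ univ.erase (idx j), 0 < lam i * W i j := by
    by_contra h; push_neg at h
    have : ∑ i ∈ univ.erase (idx j), lam i * W i j ≤ 0 := Finset.sum_nonpos h
    linarith
  have hilam : 0 < lam i := by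
    rcases (hlam i).lt_or_eq with h | h
    · exact h
    · exfalso; rw [← h] at hipos; simp at hipos
  have hiW : 0 < W i j := by nlinarith [hW i j]
  have hne : i ≠ idx j := (Finset.mem_erase.mp hi).1
  have hWk : ∀ k, k ≠ j → W i k = 0 := by
    intro k hk
    have h0 : ∑ i' ∈ univ.erase (idx j), lam i' * W i' k = 0 := by
      have := hc0 k; simp only [hc, hzero j k hk] at this; linarith
    have := (Finset.sum_eq_zero_iff_of_nonneg
      (fun i' _ => mul_nonneg (hlam i') (hW i' k))).mp h0 i hi
    have := mul_eq_zero.mp this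
    rcases this with h | h
    · exact absurd h (ne_of_gt hilam)
    · exact h
  refine ⟨i, hne, hilam, ⟨W i j, hiW, ?_⟩, hiW, hWk⟩
  rw [hrow i, Finset.sum_eq_single j]
  · intro k _ hk; rw [hWk k hk, zero_smul]
  · intro h; exact absurd (Finset.mem_univ j) h
end

section
/- Let R = W·M where W ∈ ℝ^{p×n} and M ∈ ℝ^{n×m} are nonnegative matrices, suppose W satisfies the sparseness assumption with pure-row indices i_1,…,i_n, suppose the rows of M are linearly independent, and suppose that for each j the index i_j is the unique index i ∈ {1,…,p} with W_{i,j} > 0 and W_{i,k} = 0 for all k ≠ j. Then for each j ∈ {1,…,n}, the row R^{i_j} is not a nonnegative linear combination of the other rows {R^i : i ≠ i_j}; consequently its score in the linear programming selection is strictly positive. -/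
open Finset

/-- With `R = W * M`, `W, M ≥ 0`, `W` satisfying the sparseness assumption, the
rows of `M` linearly independent, and each pure-row index `idx j` being the *unique* index `i`
with `W i j > 0` and `W i k = 0` for `k ≠ j`: for every `j`, the row `R (idx j)` is not a
nonnegative linear combination of the other rows of `R`, and consequently its score (the
infimum over nonnegative `λ` of `‖∑_{i ≠ idx j} λ i • R i − R (idx j)‖₂`) is strictly
positive. -/
theorem pure_row_score_pos {p n m : ℕ}
    (W : Matrix (Fin p) (Fin n) ℝ) (M : Matrix (Fin n) (Fin m) ℝ)
    (R : Matrix (Fin p) (Fin m) ℝ)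
    (hW : ∀ i j, 0 ≤ W i j) (hM : ∀ i j, 0 ≤ M i j)
    (hR : R = W * M)
    (idx : Fin n → Fin p)
    (hpos : ∀ j, 0 < W (idx j) j)
    (hzero : ∀ j k, k ≠ j → W (idx j) k = 0)
    (hindep : LinearIndependent ℝ M)
    (huniq : ∀ j i, (0 < W i j ∧ ∀ k, k ≠ j → W i k = 0) → i = idx j) :
    ∀ j : Fin n,
      (¬ ∃ lam : Fin p → ℝ, (∀ i, 0 ≤ lam i) ∧
          R (idx j) = ∑ i ∈ univ.erase (idx j), lam i • R i) ∧
      0 < sInf {t : ℝ | ∃ lam : Fin p → ℝ, (∀ i, 0 ≤ lam i) ∧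
          t = ‖(EuclideanSpace.equiv (Fin m) ℝ).symm
                ((∑ i ∈ univ.erase (idx j), lam i • R i) - R (idx j))‖} := by
  intro j
  have hw : 0 < W (idx j) j := hpos j
  -- coefficient vector of the difference in the basis of rows of M
  set c : (Fin p → ℝ) → (Fin n → ℝ) :=
    fun lam k => (∑ i ∈ univ.erase (idx j), lam i * W i k)
      - (if k = j then W (idx j) j else 0) with hcdef
  have hdiff : ∀ lam : Fin p → ℝ,
      ((∑ i ∈ univ.erase (idx j), lam i • R i) - R (idx j))
        = fun k' => ∑ t, c lam t * M t k' := by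
    intro lam
    funext k'
    have hRrow : ∀ i k', R i k' = ∑ t, W i t * M t k' := by
      intro i k'; rw [hR]; simp [Matrix.mul_apply]
    have h2 : ∑ t, W (idx j) t * M t k'
        = ∑ t, (if t = j then W (idx j) j else 0) * M t k' := by
      refine Finset.sum_congr rfl (fun t _ => ?_)
      by_cases h : t = j
      · subst h; simp
      · rw [hzero j t h, if_neg h]
    simp only [Pi.sub_apply, Finset.sum_apply, Pi.smul_apply, smul_eq_mul, hRrow, h2, hcdef]
    simp only [sub_mul, Finset.sum_sub_distrib, Finset.mul_sum, Finset.sum_mul]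
    rw [Finset.sum_comm]
    simp [mul_assoc]
  -- choice of a witness column for each impure row
  have hex : ∀ i : Fin p, ∃ k : Fin n, i ≠ idx j → 0 < W i j → (k ≠ j ∧ 0 < W i k) := by
    intro i
    by_cases hi : i ≠ idx j ∧ 0 < W i j
    · obtain ⟨hi1, hi2⟩ := hi
      have h : ¬ (∀ k, k ≠ j → W i k = 0) := fun h => hi1 (huniq j i ⟨hi2, h⟩)
      push_neg at h
      obtain ⟨k, hk1, hk2⟩ := h
      exact ⟨k, fun _ _ => ⟨hk1, lt_of_le_of_ne (hW i k) (Ne.symm hk2)⟩⟩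
    · exact ⟨j, fun h1 h2 => absurd ⟨h1, h2⟩ hi⟩
  choose kf hkf using hex
  set A : Finset (Fin p) := (univ.erase (idx j)).filter (fun i => 0 < W i j) with hAdef
  have hAmem : ∀ i ∈ A, i ≠ idx j ∧ 0 < W i j := by
    intro i hi
    rw [hAdef, Finset.mem_filter, Finset.mem_erase] at hi
    exact ⟨hi.1.1, hi.2⟩
  set r : ℝ := if hA : A.Nonempty then A.inf' hA (fun i => W i (kf i) / W i j) else 1
    with hrdef
  have hr0 : 0 < r := by
    rw [hrdef]
    split
    · next hA =>
      rw [Finset.lt_inf'_iff]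
      intro i hi
      obtain ⟨h1, h2⟩ := hAmem i hi
      exact div_pos (hkf i h1 h2).2 h2
    · exact one_pos
  have hrle : ∀ i ∈ A, r * W i j ≤ W i (kf i) := by
    intro i hi
    obtain ⟨h1, h2⟩ := hAmem i hi
    have : r ≤ W i (kf i) / W i j := by
      rw [hrdef]; rw [dif_pos ⟨i, hi⟩]
      exact Finset.inf'_le _ hi
    calc r * W i j ≤ (W i (kf i) / W i j) * W i j :=
          mul_le_mul_of_nonneg_right this h2.le
      _ = W i (kf i) := div_mul_cancel₀ _ h2.ne'
  -- the key quantitative estimate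
  have hkey : ∀ lam : Fin p → ℝ, (∀ i, 0 ≤ lam i) →
      r * W (idx j) j ≤ (r + n) * ‖c lam‖ := by
    intro lam hnn
    have habs : ∀ k, |c lam k| ≤ ‖c lam‖ := fun k => by
      simpa [Real.norm_eq_abs] using norm_le_pi_norm (c lam) k
    set s : ℝ := ∑ i ∈ univ.erase (idx j), lam i * W i j with hsdef
    have hsA : s = ∑ i ∈ A, lam i * W i j := by
      rw [hsdef, hAdef]
      refine (Finset.sum_filter_of_ne ?_).symm
      intro i hi hne
      rcases lt_or_eq_of_le (hW i j) with h | h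
      · exact h
      · exact absurd (by rw [← h, mul_zero]) hne
    have h1 : r * s ≤ ∑ i ∈ A, lam i * W i (kf i) := by
      rw [hsA, Finset.mul_sum]
      refine Finset.sum_le_sum (fun i hi => ?_)
      calc r * (lam i * W i j) = lam i * (r * W i j) := by ring
        _ ≤ lam i * W i (kf i) := mul_le_mul_of_nonneg_left (hrle i hi) (hnn i)
    have h3 : ∑ i ∈ A, lam i * W i (kf i)
        ≤ ∑ k ∈ univ.erase j, ∑ i ∈ univ.erase (idx j), lam i * W i k := by
      calc ∑ i ∈ A, lam i * W i (kf i)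
          ≤ ∑ i ∈ A, ∑ k ∈ univ.erase j, lam i * W i k := by
            refine Finset.sum_le_sum (fun i hi => ?_)
            obtain ⟨h1', h2'⟩ := hAmem i hi
            exact Finset.single_le_sum (f := fun k => lam i * W i k)
              (fun k _ => mul_nonneg (hnn i) (hW i k))
              (Finset.mem_erase.mpr ⟨(hkf i h1' h2').1, Finset.mem_univ _⟩)
        _ ≤ ∑ i ∈ univ.erase (idx j), ∑ k ∈ univ.erase j, lam i * W i k :=
            Finset.sum_le_sum_of_subset_of_nonneg (Finset.filter_subset _ _)
              (fun i _ _ => Finset.sum_nonneg (fun k _ => mul_nonneg (hnn i) (hW i k)))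
        _ = _ := Finset.sum_comm
    have h4 : ∑ k ∈ univ.erase j, ∑ i ∈ univ.erase (idx j), lam i * W i k
        ≤ (n : ℝ) * ‖c lam‖ := by
      have hck : ∀ k ∈ univ.erase j,
          ∑ i ∈ univ.erase (idx j), lam i * W i k = c lam k := by
        intro k hk
        rw [hcdef]
        simp [(Finset.mem_erase.mp hk).1]
      calc ∑ k ∈ univ.erase j, ∑ i ∈ univ.erase (idx j), lam i * W i k
          = ∑ k ∈ univ.erase j, c lam k := Finset.sum_congr rfl hck
        _ ≤ ∑ _k ∈ univ.erase j, ‖c lam‖ :=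
            Finset.sum_le_sum (fun k _ => le_trans (le_abs_self _) (habs k))
        _ = ((univ.erase j).card : ℝ) * ‖c lam‖ := by
            rw [Finset.sum_const, nsmul_eq_mul]
        _ ≤ (n : ℝ) * ‖c lam‖ := by
            refine mul_le_mul_of_nonneg_right ?_ (norm_nonneg _)
            have := Finset.card_erase_le (a := j) (s := (univ : Finset (Fin n)))
            exact_mod_cast le_trans this (by simp)
      
    have hsw : W (idx j) j - ‖c lam‖ ≤ s := by
      have hcj : c lam j = s - W (idx j) j := by rw [hcdef]; simp [hsdef]
      have := (abs_le.mp (habs j)).1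
      rw [hcj] at this
      linarith
    have hrs : r * s ≤ (n : ℝ) * ‖c lam‖ := le_trans h1 (le_trans h3 h4)
    nlinarith [norm_nonneg (c lam)]
  -- linear independence: zero coefficient vector
  have hcoef : ∀ v : Fin n → ℝ, (fun k' => ∑ t, v t * M t k') = (0 : Fin m → ℝ) → v = 0 := by
    intro v hv
    have hsum : ∑ t, v t • M t = 0 := by
      funext k'
      have := congrFun hv k'
      simpa using this
    funext t
    exact Fintype.linearIndependent_iff.mp hindep v hsum t
  constructor
  · rintro ⟨lam, hnn, heq⟩
    have h0 : ((∑ i ∈ univ.erase (idx j), lam i • R i) - R (idx j)) = 0 := by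
      rw [← heq]; simp
    rw [hdiff lam] at h0
    have hc0 : c lam = 0 := hcoef _ h0
    have := hkey lam hnn
    rw [hc0] at this
    simp only [norm_zero, mul_zero] at this
    nlinarith
  · -- the linear map v ↦ v ᵥ* M into Euclidean space
    set T : (Fin n → ℝ) →ₗ[ℝ] EuclideanSpace ℝ (Fin m) :=
      ((EuclideanSpace.equiv (Fin m) ℝ).symm.toLinearEquiv.toLinearMap).comp
        M.vecMulLinear with hTdef
    have hTapp : ∀ v : Fin n → ℝ,
        T v = (EuclideanSpace.equiv (Fin m) ℝ).symm (fun k' => ∑ t, v t * M t k') := by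
      intro v
      rw [hTdef]
      simp only [LinearMap.comp_apply, Matrix.vecMulLinear_apply]
      congr 1
    have hTinj : LinearMap.ker T = ⊥ := by
      rw [LinearMap.ker_eq_bot]
      intro v v' hvv'
      have h : (fun k' => ∑ t, (v - v') t * M t k') = (0 : Fin m → ℝ) := by
        have : T (v - v') = 0 := by rw [map_sub, hvv', sub_self]
        rw [hTapp] at this
        have := congrArg (EuclideanSpace.equiv (Fin m) ℝ) this
        simpa using this
      have := hcoef _ h
      exact sub_eq_zero.mp this
    obtain ⟨K, hK0, hKanti⟩ := T.exists_antilipschitzWith hTinj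
    have hKle : ∀ v : Fin n → ℝ, ‖v‖ ≤ (K : ℝ) * ‖T v‖ := by
      intro v
      have := hKanti.le_mul_dist v 0
      simpa [dist_zero_right, map_zero] using this
    -- the lower bound
    set δ : ℝ := r * W (idx j) j / ((r + n) * K) with hδdef
    have hrn : (0:ℝ) < r + n := by positivity
    have hδ0 : 0 < δ := by
      rw [hδdef]
      have : (0:ℝ) < K := hK0
      positivity
    refine lt_of_lt_of_le hδ0 (le_csInf ⟨_, ⟨(fun _ => 0), fun i => le_rfl, rfl⟩⟩ ?_)
    rintro t ⟨lam, hnn, rfl⟩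
    rw [hdiff lam, ← hTapp]
    have h1 := hkey lam hnn
    have h2 := hKle (c lam)
    rw [hδdef, div_le_iff₀ (by positivity)]
    have hKpos : (0:ℝ) < K := hK0
    calc r * W (idx j) j ≤ (r + n) * ‖c lam‖ := h1
      _ ≤ (r + n) * ((K : ℝ) * ‖T (c lam)‖) :=
          mul_le_mul_of_nonneg_left h2 hrn.le
      _ = ‖T (c lam)‖ * ((r + ↑n) * ↑K) := by ring
end

section
/- Let R = W·M where W ∈ ℝ^{p×n} and M ∈ ℝ^{n×m} are nonnegative matrices, and suppose W satisfies the sparseness assumption with pure-row indices i_1,…,i_n. If a row R^l of R is not a nonnegative linear combination of the other rows {R^i : i ≠ l}, then l ∈ {i_1,…,i_n}; in particular, R^l is a positive scalar multiple of some row of M. -/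
open Finset

/-- With `R = W * M`, `W, M ≥ 0` and `W` satisfying the sparseness assumption
with pure-row indices `idx`: if a row `R l` is not a nonnegative linear combination of the
other rows of `R`, then `l` is one of the pure-row indices `idx j`; in particular `R l` is a
positive scalar multiple of some row of `M`. -/
theorem extreme_row_is_pure {p n m : ℕ}
    (W : Matrix (Fin p) (Fin n) ℝ) (M : Matrix (Fin n) (Fin m) ℝ)
    (R : Matrix (Fin p) (Fin m) ℝ)
    (hW : ∀ i j, 0 ≤ W i j) (hM : ∀ i j, 0 ≤ M i j)
    (hR : R = W * M)
    (idx : Fin n → Fin p)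
    (hpos : ∀ j, 0 < W (idx j) j)
    (hzero : ∀ j k, k ≠ j → W (idx j) k = 0)
    (l : Fin p)
    (h : ¬ ∃ lam : Fin p → ℝ, (∀ i, 0 ≤ lam i) ∧
        R l = ∑ i ∈ univ.erase l, lam i • R i) :
    (∃ j : Fin n, l = idx j) ∧ ∃ j : Fin n, ∃ c : ℝ, 0 < c ∧ R l = c • M j := by
  classical
  have hinj : Function.Injective idx := by
    intro a b hab
    by_contra hne
    have h2 : W (idx b) a = 0 := hzero b a hne
    rw [← hab] at h2
    exact absurd h2 (ne_of_gt (hpos a))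
  have hrow : ∀ j, R (idx j) = W (idx j) j • M j := by
    intro j
    funext k
    rw [hR]
    simp only [Matrix.mul_apply, Pi.smul_apply, smul_eq_mul]
    rw [Finset.sum_eq_single j]
    · intro b _ hb
      rw [hzero j b hb, zero_mul]
    · intro hb; exact absurd (Finset.mem_univ j) hb
  obtain ⟨j0, hj0⟩ : ∃ j, l = idx j := by
    by_contra hcon
    push_neg at hcon
    apply h
    set lam : Fin p → ℝ := fun i => ∑ j, if idx j = i then W l j / W i j else 0 with hlam
    refine ⟨lam, ?_, ?_⟩
    · intro i
      apply Finset.sum_nonneg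
      intro j _
      split
      · exact div_nonneg (hW l j) (hW i j)
      · exact le_refl 0
    · have key : ∀ j : Fin n, lam (idx j) = W l j / W (idx j) j := by
        intro j
        rw [hlam]
        simp only
        rw [Finset.sum_eq_single j]
        · simp
        · intro b _ hb
          rw [if_neg (fun hh => hb (hinj hh))]
        · intro hb; exact absurd (Finset.mem_univ j) hb
      have him : Finset.univ.image idx ⊆ Finset.univ.erase l := by
        intro i hi
        simp only [Finset.mem_image, Finset.mem_univ, true_and] at hi
        obtain ⟨j, hj⟩ := hi
        simp only [Finset.mem_erase, Finset.mem_univ, and_true]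
        exact fun hil => hcon j (hil ▸ hj.symm)
      rw [← Finset.sum_subset him ?_]
      · rw [Finset.sum_image (fun a _ b _ hab => hinj hab)]
        funext k
        rw [Finset.sum_apply]
        simp only [key, hrow, Pi.smul_apply, smul_eq_mul]
        rw [hR]
        simp only [Matrix.mul_apply]
        apply Finset.sum_congr rfl
        intro t _
        have hne := ne_of_gt (hpos t)
        field_simp
      · intro i _ hi
        have hz : ∀ j : Fin n, idx j ≠ i := by
          intro j hj
          exact hi (Finset.mem_image.2 ⟨j, Finset.mem_univ j, hj⟩)
        have : lam i = 0 := by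
          rw [hlam]
          simp only
          exact Finset.sum_eq_zero fun j _ => if_neg (hz j)
        rw [this, zero_smul]
  exact ⟨⟨j0, hj0⟩, j0, W (idx j0) j0, hpos j0, by rw [hj0, hrow]⟩
end
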